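/- If n ≥ 4f + 1, a client collects timestamps from at least n - f servers of which at most f are faulty, and the (f+1)-st largest collected timestamp is t, then t is less than or equal to the maximum timestamp held by some correct server among the responders. -/

import Mathlib

lemma countP_toList_aux {α : Type*} [DecidableEq α] (R : Finset α) (q : α → Prop)
    [DecidablePred q] :
    (R.filter q).card = R.toList.countP (fun s => decide (q s)) := by
  rw [Multiset.coe_countP q R.toList |>.symm, R.coe_toList, Multiset.countP_eq_card_filter]
  rfl

/-- The (f+1)-st largest collected timestamp is at most the clock of some
correct responder. -/
theorem f1st_largest_le_correct_clock
    {α : Type*} [DecidableEq α] (n f : ℕ)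
    (Servers Faulty R : Finset α)
    (clock resp : α → ℤ)
    (hn : Servers.card = n) (hf : Faulty ⊆ Servers) (hfcard : Faulty.card ≤ f)
    (h4f : n ≥ 4 * f + 1)
    (hR : R ⊆ Servers) (hRcard : n - f ≤ R.card)
    (hhonest : ∀ s ∈ R, s ∉ Faulty → resp s = clock s)
    (L : List ℤ) (hperm : L.Perm (R.toList.map resp))
    (hsorted : L.Pairwise (· ≥ ·))
    (t : ℤ) (ht : L[f]? = some t) :
    ∃ s ∈ R, s ∉ Faulty ∧ t ≤ clock s := by
  classical
  have hflen : f < L.length := by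
    by_contra h
    push_neg at h
    rw [List.getElem?_eq_none_iff.mpr h] at ht
    exact absurd ht (Option.some_ne_none t).symm
  have htget : L.get ⟨f, hflen⟩ = t := by
    rw [List.getElem?_eq_getElem hflen] at ht
    exact Option.some.inj ht
  have htake : ∀ (i : ℕ) (hi : i < L.length), i ≤ f → t ≤ L.get ⟨i, hi⟩ := by
    intro i hi hif
    rcases eq_or_lt_of_le hif with h | h
    · subst h; rw [htget]
    · have := List.pairwise_iff_get.mp hsorted ⟨i, hi⟩ ⟨f, hflen⟩ h
      rw [htget] at this
      exact this
  set p : ℤ → Bool := fun x => decide (t ≤ x) with hp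
  have hcount_take : (L.take (f+1)).countP p = f + 1 := by
    have hall : ∀ x ∈ L.take (f+1), p x = true := by
      intro x hx
      obtain ⟨i, hxeq⟩ := List.mem_iff_get.mp hx
      have hi' : (i : ℕ) < L.length := lt_of_lt_of_le i.2 (by simp [List.length_take])
      have hle : (i : ℕ) ≤ f := by
        have h2 : (i : ℕ) < min (f + 1) L.length := by
          simpa [List.length_take] using i.2
        omega
      have hx2 : x = L[(i : ℕ)]'hi' := by
        rw [← hxeq]
        simp [List.get_eq_getElem, List.getElem_take]
      rw [hx2]
      simp only [hp, decide_eq_true_eq]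
      exact htake i hi' hle
    rw [List.countP_eq_length.mpr hall, List.length_take]
    omega
  have hcountL : f + 1 ≤ L.countP p := by
    calc f + 1 = (L.take (f+1)).countP p := hcount_take.symm
    _ ≤ L.countP p := (List.take_sublist (f+1) L).countP_le
  have hcount2 : L.countP p = (R.toList.map resp).countP p := hperm.countP_eq p
  have hcount3 : (R.toList.map resp).countP p = R.toList.countP (fun s => p (resp s)) :=
    List.countP_map
  have hcard : f + 1 ≤ (R.filter (fun s => t ≤ resp s)).card := by
    rw [countP_toList_aux R (fun s => t ≤ resp s)]
    rw [hcount2, hcount3] at hcountL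
    exact hcountL
  set S := R.filter (fun s => t ≤ resp s) with hS
  have hne : (S \ Faulty).Nonempty := by
    rw [← Finset.card_pos]
    have h1 : S.card ≤ (S \ Faulty).card + Faulty.card := by
      calc S.card ≤ ((S \ Faulty) ∪ Faulty).card :=
            Finset.card_le_card (fun x hx => by
              by_cases hxf : x ∈ Faulty
              · exact Finset.mem_union_right _ hxf
              · exact Finset.mem_union_left _ (Finset.mem_sdiff.mpr ⟨hx, hxf⟩))
        _ ≤ (S \ Faulty).card + Faulty.card := Finset.card_union_le _ _
    omega
  obtain ⟨s, hs⟩ := hne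
  rw [Finset.mem_sdiff] at hs
  obtain ⟨hsS, hsF⟩ := hs
  rw [hS, Finset.mem_filter] at hsS
  exact ⟨s, hsS.1, hsF, by rw [← hhonest s hsS.1 hsF]; exact hsS.2⟩
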